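/- For every positive integer m and every n ≥ 1, the indicator-weighted squarefree function satisfies the convolution identity μ(n)² · 1_{gcd(n,m)=1} = Σ_{d | gcd(n, m^∞)} λ(d) μ(n/d)², where λ is the Liouville function and d | m^∞ means every prime factor of d divides m. Here the sum is over divisors d of n all of whose prime factors divide m, and the term μ(n/d)² is interpreted as 0 when d ∤ n. -/

import Mathlib

open scoped ArithmeticFunction
open scoped ArithmeticFunction.Moebius ArithmeticFunction.Omega
open scoped Classical

open ArithmeticFunction

/-- Liouville function restricted to `m`-smooth numbers. -/
noncomputable def smoothLiouville (m : ℕ) : ArithmeticFunction ℤ :=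
  ⟨fun d => if d ≠ 0 ∧ ∀ p : ℕ, p.Prime → p ∣ d → p ∣ m then (-1 : ℤ) ^ (Ω d) else 0,
    by simp⟩

lemma smoothLiouville_apply (m d : ℕ) :
    smoothLiouville m d
      = if d ≠ 0 ∧ ∀ p : ℕ, p.Prime → p ∣ d → p ∣ m then (-1 : ℤ) ^ (Ω d) else 0 := rfl

lemma smoothLiouville_one (m : ℕ) : smoothLiouville m 1 = 1 := by
  rw [smoothLiouville_apply, if_pos]
  · simp
  · exact ⟨one_ne_zero, fun p hp hpd =>
      absurd (Nat.le_of_dvd one_pos hpd) (not_le.mpr hp.one_lt)⟩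

lemma smoothLiouville_isMultiplicative (m : ℕ) :
    (smoothLiouville m).IsMultiplicative := by
  constructor
  · exact smoothLiouville_one m
  · intro a b hab
    rcases eq_or_ne a 0 with rfl | ha
    · simp [smoothLiouville_apply]
    rcases eq_or_ne b 0 with rfl | hb
    · simp [smoothLiouville_apply]
    rw [smoothLiouville_apply, smoothLiouville_apply, smoothLiouville_apply]
    by_cases hcond : (∀ p : ℕ, p.Prime → p ∣ a * b → p ∣ m)
    · rw [if_pos ⟨mul_ne_zero ha hb, hcond⟩,
        if_pos ⟨ha, fun p hp hpd => hcond p hp (hpd.mul_right b)⟩,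
        if_pos ⟨hb, fun p hp hpd => hcond p hp (hpd.mul_left a)⟩,
        ← pow_add, ← cardFactors_mul ha hb]
    · have hnot : ¬ ((∀ p : ℕ, p.Prime → p ∣ a → p ∣ m)
          ∧ (∀ p : ℕ, p.Prime → p ∣ b → p ∣ m)) := by
        rintro ⟨h1, h2⟩
        exact hcond fun p hp hpd => (hp.dvd_mul.mp hpd).elim (h1 p hp) (h2 p hp)
      rw [if_neg (fun hc => hcond hc.2), eq_comm]
      rcases Decidable.not_and_iff_or_not.mp hnot with h | h
      · rw [if_neg (fun hc : a ≠ 0 ∧ _ => h hc.2), zero_mul]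
      · rw [if_neg (fun hc : b ≠ 0 ∧ _ => h hc.2), mul_zero]

/-- `μ² · 1_{coprime to m}` as an arithmetic function. -/
noncomputable def coprimeMoebiusSq (m : ℕ) : ArithmeticFunction ℤ :=
  ⟨fun n => if n.Coprime m then (μ n) ^ 2 else 0, by simp⟩

lemma coprimeMoebiusSq_apply (m n : ℕ) :
    coprimeMoebiusSq m n = if n.Coprime m then (μ n) ^ 2 else 0 := rfl

lemma coprimeMoebiusSq_isMultiplicative (m : ℕ) :
    (coprimeMoebiusSq m).IsMultiplicative := by
  constructor
  · rw [coprimeMoebiusSq_apply, if_pos (Nat.coprime_one_left m)]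
    simp
  · intro a b hab
    rw [coprimeMoebiusSq_apply, coprimeMoebiusSq_apply, coprimeMoebiusSq_apply]
    by_cases h : (a * b).Coprime m
    · have h' := Nat.coprime_mul_iff_left.mp h
      rw [if_pos h, if_pos h'.1, if_pos h'.2,
        isMultiplicative_moebius.map_mul_of_coprime hab, mul_pow]
    · rw [if_neg h, eq_comm]
      rw [Nat.coprime_mul_iff_left, Decidable.not_and_iff_or_not] at h
      rcases h with h | h
      · rw [if_neg h, zero_mul]
      · rw [if_neg h, mul_zero]

lemma key (m : ℕ) :
    coprimeMoebiusSq m = smoothLiouville m * (ArithmeticFunction.pmul μ μ) := by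
  rw [IsMultiplicative.eq_iff_eq_on_prime_powers _ (coprimeMoebiusSq_isMultiplicative m) _
    ((smoothLiouville_isMultiplicative m).mul
      (isMultiplicative_moebius.pmul isMultiplicative_moebius))]
  intro p i hp
  rw [mul_apply,
    Nat.sum_divisorsAntidiagonal (fun x y => smoothLiouville m x * (pmul μ μ) y),
    Nat.sum_divisors_prime_pow hp]
  rcases Nat.eq_zero_or_pos i with rfl | hi
  · simp [coprimeMoebiusSq_apply, Nat.coprime_one_left, smoothLiouville_one]
  have hdiv : ∀ j ∈ Finset.range (i + 1), (p : ℕ) ^ i / p ^ j = p ^ (i - j) := fun j hj =>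
    Nat.pow_div (Nat.lt_succ_iff.mp (Finset.mem_range.mp hj)) hp.pos
  by_cases hpm : p ∣ m
  · -- LHS is 0; RHS telescopes to 0
    have hlhs : coprimeMoebiusSq m (p ^ i) = 0 := by
      rw [coprimeMoebiusSq_apply, if_neg]
      intro hcop
      have hpd : p ∣ Nat.gcd (p ^ i) m := Nat.dvd_gcd (dvd_pow_self p hi.ne') hpm
      rw [Nat.Coprime] at hcop
      rw [hcop] at hpd
      exact absurd (Nat.le_of_dvd one_pos hpd) (not_le.mpr hp.one_lt)
    have hL : ∀ j : ℕ, smoothLiouville m (p ^ j) = (-1 : ℤ) ^ j := by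
      intro j
      rw [smoothLiouville_apply, cardFactors_apply_prime_pow hp, if_pos]
      refine ⟨pow_ne_zero j hp.pos.ne', fun q hq hqd => ?_⟩
      have : q = p := (Nat.prime_dvd_prime_iff_eq hq hp).mp (hq.dvd_of_dvd_pow hqd)
      rwa [this]
    rw [hlhs]
    obtain ⟨k, rfl⟩ : ∃ k, i = k + 1 := ⟨i - 1, (Nat.succ_pred_eq_of_pos hi).symm⟩
    rw [Finset.sum_congr rfl fun j hj => by rw [hdiv j hj, hL j]]
    rw [Finset.sum_range_succ, Finset.sum_range_succ]
    have h0 : ∀ j ∈ Finset.range k,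
        (-1 : ℤ) ^ j * (pmul μ μ) (p ^ (k + 1 - j)) = 0 := by
      intro j hj
      have hj' : j < k := Finset.mem_range.mp hj
      have h1 : k + 1 - j ≠ 0 := by omega
      have h2 : k + 1 - j ≠ 1 := by omega
      rw [pmul_apply, moebius_apply_prime_pow hp h1, if_neg h2]
      ring
    rw [Finset.sum_eq_zero h0]
    have hk1 : k + 1 - k = 1 := by omega
    have hk2 : k + 1 - (k + 1) = 0 := by omega
    rw [hk1, hk2, pow_zero, pow_one]
    rw [pmul_apply, pmul_apply, moebius_apply_prime hp]
    simp [pow_succ]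
  · -- p does not divide m: only d = 1 contributes
    have hcop : (p ^ i).Coprime m :=
      Nat.Coprime.pow_left i (hp.coprime_iff_not_dvd.mpr hpm)
    rw [coprimeMoebiusSq_apply, if_pos hcop]
    rw [Finset.sum_eq_single_of_mem 0 (Finset.mem_range.mpr (Nat.succ_pos i))]
    · rw [pow_zero, smoothLiouville_one, Nat.div_one, pmul_apply, one_mul, sq]
    · intro j hj hj0
      rw [smoothLiouville_apply, if_neg, zero_mul]
      rintro ⟨-, hcond⟩
      exact hpm (hcond p hp (dvd_pow_self p hj0))

/-- Convolution identity: `μ(n)² 1_{(n,m)=1} = Σ_{d | (n, m^∞)} λ(d) μ(n/d)²`,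
where the sum runs over divisors `d` of `n` all of whose prime factors divide
`m`, and `λ(d) = (-1)^Ω(d)` is the Liouville function. -/
theorem moebius_sq_coprime_convolution (n m : ℕ) (hn : 0 < n) (hm : 0 < m) :
    (if Nat.Coprime n m then (μ n) ^ 2 else 0)
      = ∑ d ∈ n.divisors.filter (fun d => ∀ p : ℕ, p.Prime → p ∣ d → p ∣ m),
          (-1 : ℤ) ^ (Ω d) * (μ (n / d)) ^ 2 := by
  have h1 : (if Nat.Coprime n m then (μ n) ^ 2 else 0) = coprimeMoebiusSq m n := rfl
  rw [h1, key m, mul_apply,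
    Nat.sum_divisorsAntidiagonal (fun x y => smoothLiouville m x * (pmul μ μ) y),
    Finset.sum_filter]
  refine Finset.sum_congr rfl fun d hd => ?_
  have hd0 : d ≠ 0 := (Nat.pos_of_mem_divisors hd).ne'
  rw [smoothLiouville_apply, pmul_apply, ← sq]
  by_cases hcond : ∀ p : ℕ, p.Prime → p ∣ d → p ∣ m
  · rw [if_pos ⟨hd0, hcond⟩, if_pos hcond]
  · rw [if_neg (by tauto), if_neg hcond, zero_mul]
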